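/- There exists α'₀ > 0 such that for every α' ∈ (0, α'₀] there exists n₀ ∈ ℕ with the following property: let H be a balanced tripartite graph on n = 3m ≥ n₀ vertices with parts A₁, A₂, A₃ such that δ(A_i, A_j) ≥ (1 − α')m for all i ≠ j, and let T = {t₁, t₂, …, t_m} be a partition of the vertex set of H into m pairwise vertex-disjoint triangles. Then H contains the square of a Hamiltonian cycle; moreover, H contains a square Hamiltonian path whose first three vertices are the three vertices of t₁ (in some order) and whose last three vertices are the three vertices of t_m (in some order). -/

import Mathlib

set_option maxHeartbeats 1000000

open Finset List

/-! ### Auxiliary list lemmas: segment reversal -/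

theorem List.chain'_iff_get {α : Type*} {R : α → α → Prop} {l : List α} :
    List.Chain' R l ↔ ∀ (i : ℕ) (h : i < l.length - 1),
      R (l.get ⟨i, by omega⟩) (l.get ⟨i + 1, by omega⟩) := by
  show List.IsChain R l ↔ _
  rw [List.isChain_iff_getElem]
  exact ⟨fun h i hi => h i (by omega), fun h i hi => h i (by omega)⟩

theorem List.chain'_append {α : Type*} {R : α → α → Prop} {l₁ l₂ : List α} :
    List.Chain' R (l₁ ++ l₂) ↔ List.Chain' R l₁ ∧ List.Chain' R l₂ ∧
      ∀ x ∈ l₁.getLast?, ∀ y ∈ l₂.head?, R x y :=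
  List.isChain_append

theorem List.chain'_reverse {α : Type*} {R : α → α → Prop} {l : List α} :
    List.Chain' R l.reverse ↔ List.Chain' (flip R) l :=
  List.isChain_reverse

theorem List.chain'_cons {α : Type*} {R : α → α → Prop} {x y : α} {l : List α} :
    List.Chain' R (x :: y :: l) ↔ R x y ∧ List.Chain' R (y :: l) :=
  List.isChain_cons_cons

section Rot

variable {V : Type}

/-- reverse the segment `[a, b)` of `l`. -/
def rotSeg (l : List V) (a b : ℕ) : List V :=
  l.take a ++ ((l.drop a).take (b - a)).reverse ++ l.drop b

lemma rotSeg_perm (l : List V) {a b : ℕ} (hab : a ≤ b) : (rotSeg l a b).Perm l := by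
  have h1 : l.take a ++ (l.drop a).take (b - a) = l.take b := by
    rw [← List.take_add]; congr 1; omega
  unfold rotSeg
  rw [List.append_assoc]
  refine (List.Perm.append_left _ ((List.reverse_perm _).append_right _)).trans ?_
  rw [← List.append_assoc, h1, List.take_append_drop]

lemma rotSeg_head? (l : List V) {a b : ℕ} (ha : 0 < a) (hl : l ≠ []) :
    (rotSeg l a b).head? = l.head? := by
  unfold rotSeg
  rw [List.append_assoc, List.head?_append_of_ne_nil, List.head?_eq_getElem?,
    List.head?_eq_getElem?, List.getElem?_take, if_pos ha]
  rw [Ne, List.take_eq_nil_iff]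
  push_neg
  exact ⟨by omega, hl⟩

lemma getLast?_drop' (l : List V) {b : ℕ} (hb : b < l.length) :
    (l.drop b).getLast? = l.getLast? := by
  rw [List.getLast?_eq_getElem?, List.getLast?_eq_getElem?, List.getElem?_drop, List.length_drop]
  congr 1
  omega

lemma rotSeg_getLast? (l : List V) {a b : ℕ} (hb : b < l.length) :
    (rotSeg l a b).getLast? = l.getLast? := by
  unfold rotSeg
  rw [List.getLast?_append, List.getLast?_append, getLast?_drop' l hb]
  have hl : l ≠ [] := by intro h; subst h; simp at hb
  obtain ⟨y, hy⟩ : ∃ y, l.getLast? = some y := by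
    cases h : l.getLast? with
    | none => exact absurd (List.getLast?_eq_none_iff.mp h) hl
    | some y => exact ⟨y, rfl⟩
  rw [hy]
  rfl

lemma rotSeg_chain' {R : V → V → Prop} (hs : Symmetric R) {l : List V} {a b : ℕ}
    (ha : 0 < a) (hab : a < b) (hb : b < l.length)
    (hpairs : ∀ i, (hi : i + 1 < l.length) → i ≠ a - 1 → i ≠ b - 1 →
      R (l[i]'(by omega)) (l[i+1]'hi))
    (h1 : R (l[a-1]'(by omega)) (l[b-1]'(by omega)))
    (h2 : R (l[a]'(by omega)) (l[b]'hb)) :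
    List.Chain' R (rotSeg l a b) := by
  have hseglen : ((l.drop a).take (b - a)).length = b - a := by
    simp only [List.length_take, List.length_drop]; omega
  have hhead : ((l.drop a).take (b - a)).head? = some (l[a]'(by omega)) := by
    rw [List.head?_eq_getElem?, List.getElem?_take, if_pos (by omega), List.getElem?_drop]
    simp
  have hlast : ((l.drop a).take (b - a)).getLast? = some (l[b-1]'(by omega)) := by
    rw [List.getLast?_eq_getElem?, hseglen, List.getElem?_take, if_pos (by omega),
      List.getElem?_drop, List.getElem?_eq_getElem (by omega)]
    simp only [show a + (b - a - 1) = b - 1 from by omega]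
  unfold rotSeg
  rw [List.append_assoc, List.chain'_append, List.chain'_append]
  refine ⟨?_, ⟨?_, ?_, ?_⟩, ?_⟩
  · rw [List.chain'_iff_get]
    intro i hi
    simp only [List.length_take] at hi
    simp only [List.get_eq_getElem, List.getElem_take]
    exact hpairs i (by omega) (by omega) (by omega)
  · rw [List.chain'_reverse, List.chain'_iff_get]
    intro i hi
    rw [hseglen] at hi
    simp only [List.get_eq_getElem, List.getElem_take, List.getElem_drop]
    exact hs (hpairs (a+i) (by omega) (by omega) (by omega))
  · rw [List.chain'_iff_get]
    intro i hi
    simp only [List.length_drop] at hi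
    simp only [List.get_eq_getElem, List.getElem_drop]
    exact hpairs (b+i) (by omega) (by omega) (by omega)
  · intro x hx y hy
    rw [List.getLast?_reverse, hhead] at hx
    rw [List.head?_eq_getElem?, List.getElem?_drop, List.getElem?_eq_getElem (by omega)] at hy
    simp only [Option.mem_def, Option.some_inj] at hx hy
    subst hx; subst hy
    simp only [show b + 0 = b from rfl]
    exact h2
  · intro x hx y hy
    have htake : (l.take a).getLast? = some (l[a-1]'(by omega)) := by
      rw [List.getLast?_eq_getElem?, List.length_take, min_eq_left (by omega : a ≤ l.length),
        List.getElem?_take, if_pos (by omega), List.getElem?_eq_getElem (by omega)]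
    rw [htake] at hx
    rw [List.head?_append_of_ne_nil, List.head?_reverse, hlast] at hy
    · simp only [Option.mem_def, Option.some_inj] at hx hy
      subst hx; subst hy
      exact h1
    · rw [Ne, List.reverse_eq_nil_iff, List.take_eq_nil_iff, List.drop_eq_nil_iff]
      push_neg
      omega

end Rot

/-! ### An Ore-type Hamiltonian connectedness theorem -/

section Ham

variable {V : Type} [Fintype V] [DecidableEq V]

def addEdge (G : SimpleGraph V) (u v : V) : SimpleGraph V where
  Adj a b := G.Adj a b ∨ (u ≠ v ∧ ((a = u ∧ b = v) ∨ (a = v ∧ b = u)))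
  symm := by
    constructor
    rintro a b (h | ⟨h1, ⟨rfl, rfl⟩ | ⟨rfl, rfl⟩⟩)
    · exact Or.inl h.symm
    · exact Or.inr ⟨h1, Or.inr ⟨rfl, rfl⟩⟩
    · exact Or.inr ⟨h1, Or.inl ⟨rfl, rfl⟩⟩
  loopless := by
    constructor
    rintro a (h | ⟨h1, ⟨rfl, h2⟩ | ⟨rfl, h2⟩⟩)
    · exact G.irrefl h
    · exact h1 h2
    · exact h1 h2.symm

lemma addEdge_adj {G : SimpleGraph V} {u v a b : V} :
    (addEdge G u v).Adj a b ↔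
      (G.Adj a b ∨ (u ≠ v ∧ ((a = u ∧ b = v) ∨ (a = v ∧ b = u)))) := Iff.rfl

instance {G : SimpleGraph V} [DecidableRel G.Adj] {u v : V} :
    DecidableRel (addEdge G u v).Adj :=
  fun _ _ => decidable_of_iff _ addEdge_adj.symm

lemma le_addEdge {G : SimpleGraph V} {u v : V} : G ≤ addEdge G u v := fun _ _ h => Or.inl h

lemma addEdge_comm {G : SimpleGraph V} {u v : V} : addEdge G u v = addEdge G v u := by
  ext a b
  rw [addEdge_adj, addEdge_adj]
  constructor <;> (rintro (h | ⟨hne, h⟩); exacts [Or.inl h, Or.inr ⟨hne.symm, h.symm⟩])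

lemma degree_mono {G G' : SimpleGraph V} [DecidableRel G.Adj] [DecidableRel G'.Adj]
    (h : G ≤ G') (v : V) : G.degree v ≤ G'.degree v := by
  apply Finset.card_le_card
  intro w hw
  rw [SimpleGraph.mem_neighborFinset] at *
  exact h hw

def badPairs (G : SimpleGraph V) [DecidableRel G.Adj] : Finset (V × V) :=
  Finset.univ.filter (fun p => p.1 ≠ p.2 ∧ ¬ G.Adj p.1 p.2)

lemma splice_core {G : SimpleGraph V} [DecidableRel G.Adj] {u v : V}
    (hne : u ≠ v) (huv : ¬ G.Adj u v)
    (hdeg : Fintype.card V + 1 ≤ G.degree u + G.degree v)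
    {l : List V} (hc : List.Chain' (addEdge G u v).Adj l) (hnd : l.Nodup) (hm : ∀ w, w ∈ l)
    {k : ℕ} (hk1 : k + 1 < l.length)
    (hku : l[k]'(by omega) = u) (hkv : l[k+1]'hk1 = v) :
    ∃ l' : List V, List.Chain' G.Adj l' ∧ l'.Perm l ∧
      l'.head? = l.head? ∧ l'.getLast? = l.getLast? := by
  have htf : l.toFinset = Finset.univ := Finset.eq_univ_iff_forall.mpr
    (fun w => List.mem_toFinset.mpr (hm w))
  have hcard : l.length = Fintype.card V := by
    rw [← Finset.card_univ, ← htf, List.toFinset_card_of_nodup hnd]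
  set n := l.length with hn_def
  have hGpair : ∀ i, (hi : i + 1 < n) → i ≠ k → G.Adj (l[i]'(by omega)) (l[i+1]'hi) := by
    intro i hi hik
    have h := List.chain'_iff_get.mp hc i (by omega)
    simp only [List.get_eq_getElem] at h
    rw [addEdge_adj] at h
    rcases h with h | ⟨-, ⟨h1, h2⟩ | ⟨h1, h2⟩⟩
    · exact h
    · exact absurd (hnd.getElem_inj_iff.mp (by rw [h1, ← hku])) hik
    · have hik1 : i = k + 1 := hnd.getElem_inj_iff.mp (by rw [h1, ← hkv])
      have hi1k : i + 1 = k := hnd.getElem_inj_iff.mp (by rw [h2, ← hku])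
      omega
  have hfmem : ∀ z : V, List.idxOf z l < n := fun z => List.idxOf_lt_length_iff.mpr (hm z)
  have hfget : ∀ z : V, l[List.idxOf z l]'(hfmem z) = z := fun z => List.getElem_idxOf _
  have hfinj : ∀ z w : V, List.idxOf z l = List.idxOf w l → z = w :=
    fun z w h => (List.idxOf_inj (hm z)).mp h
  set Au : Finset ℕ := (Finset.range (n-1)).filter (fun j => G.Adj u (l.getD j u)) with hAu_def
  set Bv : Finset ℕ := (Finset.range (n-1)).filter (fun j => G.Adj v (l.getD (j+1) v)) with hBv_def
  have hAu_card : G.degree u - 1 ≤ Au.card := by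
    have himg : ((G.neighborFinset u).image (fun z => List.idxOf z l)) \ {n-1} ⊆ Au := by
      intro j hj
      simp only [Finset.mem_sdiff, Finset.mem_image, Finset.mem_singleton,
        SimpleGraph.mem_neighborFinset] at hj
      obtain ⟨⟨z, hz, rfl⟩, hj2⟩ := hj
      rw [hAu_def, Finset.mem_filter, Finset.mem_range]
      refine ⟨by have := hfmem z; omega, ?_⟩
      rw [List.getD_eq_getElem _ _ (hfmem z), hfget z]
      exact hz
    have h1 : ((G.neighborFinset u).image (fun z => List.idxOf z l)).card = G.degree u :=
      Finset.card_image_of_injOn (fun z _ w _ h => hfinj z w h)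
    have h2 := Finset.le_card_sdiff ({n-1} : Finset ℕ)
      ((G.neighborFinset u).image (fun z => List.idxOf z l))
    have h3 := Finset.card_le_card himg
    simp only [Finset.card_singleton] at h2
    omega
  have hBv_card : G.degree v - 1 ≤ Bv.card := by
    have himg : (((G.neighborFinset v).image (fun z => List.idxOf z l)) \ {0}).image (· - 1)
        ⊆ Bv := by
      intro j hj
      simp only [Finset.mem_image, Finset.mem_sdiff, Finset.mem_singleton,
        SimpleGraph.mem_neighborFinset] at hj
      obtain ⟨i, ⟨⟨z, hz, rfl⟩, hi0⟩, rfl⟩ := hj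
      rw [hBv_def, Finset.mem_filter, Finset.mem_range]
      have hzn := hfmem z
      refine ⟨by omega, ?_⟩
      rw [List.getD_eq_getElem _ _ (show List.idxOf z l - 1 + 1 < n by omega)]
      have : List.idxOf z l - 1 + 1 = List.idxOf z l := by omega
      simp only [this, hfget z]
      exact hz
    have h1 : ((G.neighborFinset v).image (fun z => List.idxOf z l)).card = G.degree v :=
      Finset.card_image_of_injOn (fun z _ w _ h => hfinj z w h)
    have h2 := Finset.le_card_sdiff ({0} : Finset ℕ)
      ((G.neighborFinset v).image (fun z => List.idxOf z l))
    have h3 := Finset.card_le_card himg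
    have h4 : ((((G.neighborFinset v).image (fun z => List.idxOf z l)) \ {0}).image
        (· - 1)).card = (((G.neighborFinset v).image (fun z => List.idxOf z l)) \ {0}).card := by
      apply Finset.card_image_of_injOn
      intro a ha b hb hab
      simp only [Finset.mem_coe, Finset.mem_sdiff, Finset.mem_singleton] at ha hb
      obtain ⟨-, ha0⟩ := ha
      obtain ⟨-, hb0⟩ := hb
      simp only at hab
      omega
    simp only [Finset.card_singleton] at h2
    omega
  have hkAu : k ∉ Au := by
    rw [hAu_def, Finset.mem_filter]
    rintro ⟨-, hadj⟩
    rw [List.getD_eq_getElem _ _ (show k < n by omega), hku] at hadj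
    exact G.irrefl hadj
  have hkBv : k ∉ Bv := by
    rw [hBv_def, Finset.mem_filter]
    rintro ⟨-, hadj⟩
    rw [List.getD_eq_getElem _ _ hk1, hkv] at hadj
    exact G.irrefl hadj
  have hsub : Au ∪ Bv ⊆ (Finset.range (n-1)).erase k := by
    intro j hj
    rw [Finset.mem_erase]
    have hjr : j ∈ Finset.range (n-1) := by
      rcases Finset.mem_union.mp hj with h | h
      · exact Finset.mem_of_mem_filter _ h
      · exact Finset.mem_of_mem_filter _ h
    refine ⟨?_, hjr⟩
    rintro rfl
    rcases Finset.mem_union.mp hj with h | h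
    · exact hkAu h
    · exact hkBv h
  have hek : k ∈ Finset.range (n-1) := Finset.mem_range.mpr (by omega)
  have hcerase : ((Finset.range (n-1)).erase k).card = n - 2 := by
    rw [Finset.card_erase_of_mem hek, Finset.card_range]
    omega
  have hUB := Finset.card_le_card hsub
  have hsum := Finset.card_union_add_card_inter Au Bv
  have hint : 0 < (Au ∩ Bv).card := by
    have hdule : G.degree u < Fintype.card V := G.degree_lt_card_verts u
    have hdvle : G.degree v < Fintype.card V := G.degree_lt_card_verts v
    omega
  obtain ⟨j, hj⟩ := Finset.card_pos.mp hint
  have hjAu := (Finset.mem_inter.mp hj).1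
  have hjBv := (Finset.mem_inter.mp hj).2
  rw [hAu_def, Finset.mem_filter, Finset.mem_range] at hjAu
  rw [hBv_def, Finset.mem_filter, Finset.mem_range] at hjBv
  obtain ⟨hjn, hju'⟩ := hjAu
  obtain ⟨-, hjv'⟩ := hjBv
  rw [List.getD_eq_getElem _ _ (show j < n by omega)] at hju'
  rw [List.getD_eq_getElem _ _ (show j + 1 < n by omega)] at hjv'
  have hjk : j ≠ k := by
    rintro rfl
    exact hkAu (Finset.mem_inter.mp hj).1
  have hlne : l ≠ [] := by
    intro h
    have h0 : l.length = 0 := by rw [h]; rfl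
    omega
  rcases Nat.lt_or_ge j k with hlt | hge
  · refine ⟨rotSeg l (j+1) (k+1), ?_, rotSeg_perm l (by omega),
      rotSeg_head? l (by omega) hlne, rotSeg_getLast? l (by omega)⟩
    apply rotSeg_chain' (fun _ _ h => G.adj_symm h) (by omega : 0 < j+1) (by omega : j+1 < k+1) (by omega : k+1 < n)
    · intro i hi hia hib
      simp only [Nat.add_sub_cancel] at hia hib
      exact hGpair i hi (by omega)
    · simp only [Nat.add_sub_cancel]
      rw [hku]
      exact hju'.symm
    · rw [hkv]
      exact hjv'.symm
  · have hgt : k < j := by omega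
    refine ⟨rotSeg l (k+1) (j+1), ?_, rotSeg_perm l (by omega),
      rotSeg_head? l (by omega) hlne, rotSeg_getLast? l (by omega)⟩
    apply rotSeg_chain' (fun _ _ h => G.adj_symm h) (by omega : 0 < k+1) (by omega : k+1 < j+1) (by omega : j+1 < n)
    · intro i hi hia hib
      simp only [Nat.add_sub_cancel] at hia hib
      exact hGpair i hi (by omega)
    · simp only [Nat.add_sub_cancel]
      rw [hku]
      exact hju'
    · rw [hkv]
      exact hjv'

lemma completeHam {G : SimpleGraph V} (hcomp : ∀ a b : V, a ≠ b → G.Adj a b)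
    {x y : V} (hxy : x ≠ y) :
    ∃ l : List V, List.Chain' G.Adj l ∧ l.Nodup ∧ (∀ w, w ∈ l) ∧
      l.head? = some x ∧ l.getLast? = some y := by
  set A := (Finset.univ \ {x, y} : Finset V).toList with hA_def
  have hA : ∀ w, w ∈ A ↔ (w ≠ x ∧ w ≠ y) := by
    intro w
    rw [hA_def, Finset.mem_toList]
    simp [Finset.mem_sdiff]
  have hnd : (x :: (A ++ [y])).Nodup := by
    rw [List.nodup_cons, List.nodup_append]
    refine ⟨?_, Finset.nodup_toList _, List.nodup_singleton y, ?_⟩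
    · rw [List.mem_append, List.mem_singleton]
      rintro (h | h)
      · exact ((hA x).mp h).1 rfl
      · exact hxy h
    · intro w hw b hb
      rw [List.mem_singleton] at hb
      subst hb
      exact ((hA w).mp hw).2
  refine ⟨x :: (A ++ [y]), ?_, hnd, ?_, rfl, ?_⟩
  · exact List.Pairwise.isChain (hnd.imp (fun hab => hcomp _ _ hab))
  · intro w
    rw [List.mem_cons, List.mem_append, List.mem_singleton, hA w]
    by_cases h1 : w = x
    · exact Or.inl h1
    · by_cases h2 : w = y
      · exact Or.inr (Or.inr h2)
      · exact Or.inr (Or.inl ⟨h1, h2⟩)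
  · rw [show x :: (A ++ [y]) = (x :: A) ++ [y] from rfl, List.getLast?_append]
    rfl

lemma hamPath (c : ℕ) : ∀ (G : SimpleGraph V) [DecidableRel G.Adj],
    (badPairs G).card ≤ c →
    (∀ a b : V, a ≠ b → ¬ G.Adj a b → Fintype.card V + 1 ≤ G.degree a + G.degree b) →
    ∀ x y : V, x ≠ y →
    ∃ l : List V, List.Chain' G.Adj l ∧ l.Nodup ∧ (∀ w, w ∈ l) ∧
      l.head? = some x ∧ l.getLast? = some y := by
  induction c with
  | zero =>
    intro G _ hbad hdeg x y hxy
    have hcomp : ∀ a b : V, a ≠ b → G.Adj a b := by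
      intro a b hab
      by_contra h
      have hmem : (a, b) ∈ badPairs G := by
        rw [badPairs, Finset.mem_filter]
        exact ⟨Finset.mem_univ _, hab, h⟩
      have := Finset.card_eq_zero.mp (Nat.le_zero.mp hbad)
      rw [this] at hmem
      exact absurd hmem (Finset.notMem_empty _)
    exact completeHam hcomp hxy
  | succ c ih =>
    intro G _ hbad hdeg x y hxy
    by_cases hcomp : ∀ a b : V, a ≠ b → G.Adj a b
    · exact completeHam hcomp hxy
    · push_neg at hcomp
      obtain ⟨u, v, hne, huv⟩ := hcomp
      have hdeguv := hdeg u v hne huv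
      have hbadss : badPairs (addEdge G u v) ⊂ badPairs G := by
        constructor
        · intro p hp
          rw [badPairs, Finset.mem_filter] at hp ⊢
          exact ⟨Finset.mem_univ _, hp.2.1, fun h => hp.2.2 (le_addEdge h)⟩
        · intro hsub
          have hmem : (u, v) ∈ badPairs G := by
            rw [badPairs, Finset.mem_filter]
            exact ⟨Finset.mem_univ _, hne, huv⟩
          have := hsub hmem
          rw [badPairs, Finset.mem_filter] at this
          exact this.2.2 (Or.inr ⟨hne, Or.inl ⟨rfl, rfl⟩⟩)
      have hc' : (badPairs (addEdge G u v)).card ≤ c := by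
        have := Finset.card_lt_card hbadss
        omega
      have hdeg' : ∀ a b : V, a ≠ b → ¬ (addEdge G u v).Adj a b →
          Fintype.card V + 1 ≤ (addEdge G u v).degree a + (addEdge G u v).degree b := by
        intro a b hab h
        have hnG : ¬ G.Adj a b := fun hg => h (le_addEdge hg)
        exact le_trans (hdeg a b hab hnG)
          (Nat.add_le_add (degree_mono le_addEdge a) (degree_mono le_addEdge b))
      obtain ⟨l, hc, hnd, hm, hh, hl⟩ := ih (addEdge G u v) hc' hdeg' x y hxy
      by_cases hgc : List.Chain' G.Adj l
      · exact ⟨l, hgc, hnd, hm, hh, hl⟩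
      · rw [List.chain'_iff_get] at hgc
        push_neg at hgc
        obtain ⟨k, hk, hkn⟩ := hgc
        have hadd := List.chain'_iff_get.mp hc k hk
        simp only [List.get_eq_getElem] at hadd hkn
        rw [addEdge_adj] at hadd
        rcases hadd with h | ⟨-, ⟨h1, h2⟩ | ⟨h1, h2⟩⟩
        · exact absurd h hkn
        · obtain ⟨l', hcl', hperm, hh', hl'⟩ :=
            splice_core hne huv hdeguv hc hnd hm (by omega : k + 1 < l.length) h1 h2
          exact ⟨l', hcl', (hperm.nodup_iff).mpr hnd, fun w => hperm.mem_iff.mpr (hm w),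
            by rw [hh', hh], by rw [hl', hl]⟩
        · have hc2 : List.Chain' (addEdge G v u).Adj l := by
            rw [← addEdge_comm]; exact hc
          obtain ⟨l', hcl', hperm, hh', hl'⟩ :=
            splice_core hne.symm (fun h => huv h.symm) (by omega) hc2 hnd hm
              (by omega : k + 1 < l.length) h1 h2
          exact ⟨l', hcl', (hperm.nodup_iff).mpr hnd, fun w => hperm.mem_iff.mpr (hm w),
            by rw [hh', hh], by rw [hl', hl]⟩

theorem hamConnected (G : SimpleGraph V) [DecidableRel G.Adj]
    (hdeg : ∀ a b : V, a ≠ b → ¬ G.Adj a b →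
      Fintype.card V + 1 ≤ G.degree a + G.degree b)
    (x y : V) (hxy : x ≠ y) :
    ∃ l : List V, List.Chain' G.Adj l ∧ l.Nodup ∧ (∀ w, w ∈ l) ∧
      l.head? = some x ∧ l.getLast? = some y :=
  hamPath (badPairs G).card G le_rfl hdeg x y hxy

end Ham

/-! ### The square path predicate -/

/-- recursive "square path adjacency" predicate (ignoring nodup) -/
def SP {V : Type} (G : SimpleGraph V) : List V → Prop
  | [] => True
  | [_] => True
  | x :: y :: rest => G.Adj x y ∧ (∀ z ∈ rest.head?, G.Adj x z) ∧ SP G (y :: rest)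

section SPsec

variable {V : Type}

lemma SP_tail {G : SimpleGraph V} {x : V} {l : List V} (h : SP G (x :: l)) : SP G l := by
  cases l with
  | nil => trivial
  | cons y rest => exact h.2.2

lemma SP_cons {G : SimpleGraph V} {x : V} {l : List V} (h : SP G l)
    (h1 : ∀ z ∈ l.head?, G.Adj x z) (h2 : ∀ z ∈ l.tail.head?, G.Adj x z) :
    SP G (x :: l) := by
  cases l with
  | nil => trivial
  | cons y rest => exact ⟨h1 y rfl, h2, h⟩

lemma SP_getElem? {G : SimpleGraph V} {l : List V} (h : SP G l) :
    ∀ n (x y : V), l[n]? = some x → (l[n+1]? = some y ∨ l[n+2]? = some y) → G.Adj x y := by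
  induction l with
  | nil => intro n x y hx _; simp at hx
  | cons a l ih =>
    intro n x y hx hy
    cases n with
    | zero =>
      simp only [List.getElem?_cons_zero, Option.some_inj] at hx
      subst hx
      cases l with
      | nil => simp at hy
      | cons b rest =>
        rcases hy with hy | hy
        · simp only [List.getElem?_cons_succ, List.getElem?_cons_zero, Option.some_inj] at hy
          subst hy
          exact h.1
        · simp only [List.getElem?_cons_succ, List.getElem?_cons_zero] at hy
          have := h.2.1 y
          rw [List.head?_eq_getElem?] at this
          exact this hy
    | succ n =>
      simp only [List.getElem?_cons_succ] at hx hy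
      exact ih (SP_tail h) n x y hx hy

lemma SP_fin {G : SimpleGraph V} {l : List V} (h : SP G l) :
    ∀ i j : Fin l.length, (i.val + 1 = j.val ∨ i.val + 2 = j.val) → G.Adj (l.get i) (l.get j) := by
  intro i j hij
  apply SP_getElem? h i.val (l.get i) (l.get j)
  · simp [List.getElem?_eq_getElem i.isLt]
  · rcases hij with h' | h'
    · left; rw [h']; simp [List.getElem?_eq_getElem j.isLt]
    · right; rw [h']; simp [List.getElem?_eq_getElem j.isLt]

end SPsec

/-- `G` contains the square of a Hamiltonian cycle. -/
def HasSquareHamCycle {V : Type*} [Fintype V] (G : SimpleGraph V) : Prop :=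
  ∃ f : Fin (Fintype.card V) ≃ V, ∀ i j : Fin (Fintype.card V),
    ((i.val + 1) % Fintype.card V = j.val ∨ (i.val + 2) % Fintype.card V = j.val) →
    G.Adj (f i) (f j)

/-- `l` is a square path in `G`: distinct vertices with `vᵢ ~ vⱼ` whenever
`1 ≤ |i - j| ≤ 2`. -/
def IsSquarePath {V : Type*} (G : SimpleGraph V) (l : List V) : Prop :=
  l.Nodup ∧ ∀ i j : Fin l.length,
    (i.val + 1 = j.val ∨ i.val + 2 = j.val) → G.Adj (l.get i) (l.get j)

lemma cycleFromList {V : Type} [Fintype V] [DecidableEq V] (G : SimpleGraph V) (cl : List V)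
    (hsp : SP G cl) (hnd : cl.Nodup) (hmm : ∀ v, v ∈ cl)
    (hcard : cl.length = Fintype.card V)
    (h3 : 3 ≤ cl.length)
    (w1 : G.Adj (cl[cl.length - 1]'(by omega)) (cl[0]'(by omega)))
    (w2 : G.Adj (cl[cl.length - 1]'(by omega)) (cl[1]'(by omega)))
    (w3 : G.Adj (cl[cl.length - 2]'(by omega)) (cl[0]'(by omega))) :
    HasSquareHamCycle G := by
  refine ⟨(finCongr hcard.symm).trans (List.Nodup.getEquivOfForallMemList cl hnd hmm), ?_⟩
  intro i j hij
  have hiN : i.val < cl.length := by rw [hcard]; exact i.isLt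
  have hjN : j.val < cl.length := by rw [hcard]; exact j.isLt
  have hf : ∀ (p : Fin (Fintype.card V)) (hp : p.val < cl.length),
      ((finCongr hcard.symm).trans (List.Nodup.getEquivOfForallMemList cl hnd hmm)) p
        = cl[p.val]'hp := by
    intro p hp
    rfl
  rw [hf i hiN, hf j hjN]
  have hij' : (i.val + 1) % cl.length = j.val ∨ (i.val + 2) % cl.length = j.val := by
    rw [hcard]; exact hij
  clear hij
  rename' hij' => hij
  have hgd : ∀ (p : ℕ) (hp : p < cl.length), cl[p]? = some (cl[p]'hp) :=
    fun p hp => List.getElem?_eq_getElem hp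
  rcases hij with hij | hij
  · rcases Nat.lt_or_ge (i.val + 1) cl.length with hlt | hge
    · have hj : j.val = i.val + 1 := by rw [← hij, Nat.mod_eq_of_lt hlt]
      apply SP_getElem? hsp i.val _ _ (hgd i.val hiN)
      left
      rw [← hj]
      exact hgd j.val hjN
    · have hiv : i.val + 1 = cl.length := by omega
      have hj : j.val = 0 := by rw [← hij, hiv, Nat.mod_self]
      have h1 : cl[i.val]'hiN = cl[cl.length-1]'(by omega) := by congr 1; omega
      have h2 : cl[j.val]'hjN = cl[0]'(by omega) := by congr 1
      rw [h1, h2]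
      exact w1
  · rcases Nat.lt_or_ge (i.val + 2) cl.length with hlt | hge
    · have hj : j.val = i.val + 2 := by rw [← hij, Nat.mod_eq_of_lt hlt]
      apply SP_getElem? hsp i.val _ _ (hgd i.val hiN)
      right
      rw [← hj]
      exact hgd j.val hjN
    · rcases Nat.lt_or_ge (i.val + 2) (cl.length + 1) with hlt2 | hge2
      · have hiv : i.val + 2 = cl.length := by omega
        have hj : j.val = 0 := by rw [← hij, hiv, Nat.mod_self]
        have h1 : cl[i.val]'hiN = cl[cl.length-2]'(by omega) := by congr 1; omega
        have h2 : cl[j.val]'hjN = cl[0]'(by omega) := by congr 1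
        rw [h1, h2]
        exact w3
      · have hiv : i.val + 2 = cl.length + 1 := by omega
        have hj : j.val = 1 := by
          rw [← hij, hiv, Nat.add_mod_left]
          exact Nat.mod_eq_of_lt (by omega)
        have h1 : cl[i.val]'hiN = cl[cl.length-1]'(by omega) := by congr 1; omega
        have h2 : cl[j.val]'hjN = cl[1]'(by omega) := by simp only [hj]
        rw [h1, h2]
        exact w2

/-! ### Assembling square paths from triangle blocks -/

section Asm

variable {V : Type} [DecidableEq V] {m : ℕ} (a : Fin 3 → Fin m → V)

def blk (k : Fin m) : List V := [a 0 k, a 1 k, a 2 k]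

lemma SP_three {G : SimpleGraph V} {x y z : V} (h1 : G.Adj x y) (h2 : G.Adj x z)
    (h3 : G.Adj y z) : SP G [x, y, z] := by
  refine ⟨h1, ?_, h3, ?_, trivial⟩
  · intro w hw
    simp only [List.head?_cons, Option.mem_def, Option.some_inj] at hw
    subst hw; exact h2
  · intro w hw
    simp at hw

lemma SP_flatMap (H : SimpleGraph V) (T : SimpleGraph (Fin m))
    (hin : ∀ (i j : Fin 3) (k : Fin m), i ≠ j → H.Adj (a i k) (a j k))
    (hcross : ∀ k k', T.Adj k k' → ∀ i j : Fin 3, i ≠ j → H.Adj (a i k) (a j k'))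
    (L : List (Fin m)) (hch : L.Chain' T.Adj) : SP H (L.flatMap (blk a)) := by
  induction L with
  | nil => trivial
  | cons k L ih =>
    cases L with
    | nil =>
      show SP H [a 0 k, a 1 k, a 2 k]
      exact SP_three (hin 0 1 k (by decide)) (hin 0 2 k (by decide)) (hin 1 2 k (by decide))
    | cons k' L' =>
      rw [List.chain'_cons] at hch
      obtain ⟨hT, hch'⟩ := hch
      have hM : SP H ((k' :: L').flatMap (blk a)) := ih hch'
      have hMeq : (k' :: L').flatMap (blk a)
          = a 0 k' :: a 1 k' :: a 2 k' :: L'.flatMap (blk a) := rfl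
      show SP H (a 0 k :: a 1 k :: a 2 k :: (k' :: L').flatMap (blk a))
      apply SP_cons
      · apply SP_cons
        · apply SP_cons hM
          · rw [hMeq]
            intro w hw
            simp only [List.head?_cons, Option.mem_def, Option.some_inj] at hw
            subst hw
            exact hcross k k' hT 2 0 (by decide)
          · rw [hMeq]
            intro w hw
            simp only [List.tail_cons, List.head?_cons, Option.mem_def, Option.some_inj] at hw
            subst hw
            exact hcross k k' hT 2 1 (by decide)
        · intro w hw
          simp only [List.head?_cons, Option.mem_def, Option.some_inj] at hw
          subst hw
          exact hin 1 2 k (by decide)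
        · rw [show (a 2 k :: (k' :: L').flatMap (blk a)).tail = (k' :: L').flatMap (blk a) from rfl,
            hMeq]
          intro w hw
          simp only [List.head?_cons, Option.mem_def, Option.some_inj] at hw
          subst hw
          exact hcross k k' hT 1 0 (by decide)
      · intro w hw
        simp only [List.head?_cons, Option.mem_def, Option.some_inj] at hw
        subst hw
        exact hin 0 1 k (by decide)
      · intro w hw
        simp only [List.tail_cons, List.head?_cons, Option.mem_def, Option.some_inj] at hw
        subst hw
        exact hin 0 2 k (by decide)

lemma nodup_flatMap_blk (hnd3 : ∀ k : Fin m, (blk a k).Nodup)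
    (hdisjblk : ∀ k k' : Fin m, k ≠ k' → ∀ v ∈ blk a k, v ∉ blk a k')
    (L : List (Fin m)) (hnd : L.Nodup) : (L.flatMap (blk a)).Nodup := by
  induction L with
  | nil => exact List.nodup_nil
  | cons k L ih =>
    rw [List.nodup_cons] at hnd
    rw [List.flatMap_cons, List.nodup_append]
    refine ⟨hnd3 k, ih hnd.2, ?_⟩
    intro v hv w hv' hvw
    subst hvw
    obtain ⟨k', hk', hvk'⟩ := List.mem_flatMap.mp hv'
    have hkk' : k ≠ k' := by rintro rfl; exact hnd.1 hk'
    exact hdisjblk k k' hkk' v hv hvk'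

lemma length_flatMap_blk (L : List (Fin m)) : (L.flatMap (blk a)).length = 3 * L.length := by
  induction L with
  | nil => rfl
  | cons k L ih =>
    rw [List.flatMap_cons, List.length_append, ih, List.length_cons]
    show 3 + 3 * L.length = 3 * (L.length + 1)
    ring

lemma take_flatMap_blk (L : List (Fin m)) (w : Fin m) (h : L.head? = some w) :
    (L.flatMap (blk a)).take 3 = blk a w := by
  cases L with
  | nil => simp at h
  | cons u Ltl =>
    rw [List.head?_cons, Option.some_inj] at h
    subst h
    rw [List.flatMap_cons]
    exact List.take_left' rfl

lemma drop_flatMap_blk (L : List (Fin m)) (w : Fin m) (h : L.getLast? = some w) :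
    (L.flatMap (blk a)).drop ((L.flatMap (blk a)).length - 3) = blk a w := by
  obtain ⟨L'', rfl⟩ := List.getLast?_eq_some_iff.mp h
  have he : (L'' ++ [w]).flatMap (blk a) = L''.flatMap (blk a) ++ blk a w := by
    rw [List.flatMap_append]
    simp
  rw [he, List.length_append]
  have h3 : (blk a w).length = 3 := rfl
  rw [h3, Nat.add_sub_cancel]
  exact List.drop_left' rfl

end Asm

theorem stmt3 :
    ∃ α'₀ : ℝ, 0 < α'₀ ∧ ∀ α' : ℝ, 0 < α' → α' ≤ α'₀ →
    ∃ n₀ : ℕ, ∀ (V : Type) [Fintype V] [DecidableEq V] (H : SimpleGraph V)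
      [DecidableRel H.Adj] (m : ℕ) (hm : 0 < m) (A : Fin 3 → Finset V)
      (t : Fin m → Finset V),
      Fintype.card V = 3 * m →
      n₀ ≤ 3 * m →
      (∀ i, (A i).card = m) →
      (∀ i j, i ≠ j → Disjoint (A i) (A j)) →
      A 0 ∪ A 1 ∪ A 2 = Finset.univ →
      (∀ i, ∀ u ∈ A i, ∀ v ∈ A i, ¬ H.Adj u v) →
      (∀ i j, i ≠ j → ∀ v ∈ A i, (1 - α') * m ≤ (((A j).filter (H.Adj v)).card : ℝ)) →
      (∀ k, (t k).card = 3 ∧ ∀ u ∈ t k, ∀ v ∈ t k, u ≠ v → H.Adj u v) →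
      (∀ k l, k ≠ l → Disjoint (t k) (t l)) →
      (∀ v : V, ∃ k, v ∈ t k) →
      HasSquareHamCycle H ∧
      ∃ l : List V, IsSquarePath H l ∧ l.length = Fintype.card V ∧
        (∀ v : V, v ∈ l) ∧
        (l.take 3).toFinset = t ⟨0, hm⟩ ∧
        (l.drop (l.length - 3)).toFinset = t ⟨m - 1, Nat.sub_lt hm one_pos⟩ := by
  refine ⟨1/100, by norm_num, ?_⟩
  intro α' hα0 hα1
  refine ⟨120, ?_⟩
  intro V _ _ H _ m hm A t hcardV hn0 hAcard hAdisj hAcover hAindep hdegH htri htdisj htcover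
  classical
  have hm40 : 40 ≤ m := by omega
  have hfin3 : ∀ i : Fin 3, i = 0 ∨ i = 1 ∨ i = 2 := by decide
  -- every vertex is in exactly one part
  have hpartu : ∀ (v : V) (i j : Fin 3), v ∈ A i → v ∈ A j → i = j := by
    intro v i j hi hj
    by_contra hne
    exact (Finset.disjoint_left.mp (hAdisj i j hne)) hi hj
  have hpart : ∀ v : V, ∃ i, v ∈ A i := by
    intro v
    have hv : v ∈ A 0 ∪ A 1 ∪ A 2 := by rw [hAcover]; exact Finset.mem_univ v
    rcases Finset.mem_union.mp hv with hv | hv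
    · rcases Finset.mem_union.mp hv with hv | hv
      · exact ⟨0, hv⟩
      · exact ⟨1, hv⟩
    · exact ⟨2, hv⟩
  -- each triangle meets each part in exactly one vertex
  have hone : ∀ (i : Fin 3) (k : Fin m), ∃ x, t k ∩ A i = {x} := by
    intro i k
    have hle1 : ∀ j : Fin 3, (t k ∩ A j).card ≤ 1 := by
      intro j
      by_contra hgt
      push_neg at hgt
      obtain ⟨u, hu, w, hw, huw⟩ := Finset.one_lt_card.mp hgt
      have hu' := Finset.mem_inter.mp hu
      have hw' := Finset.mem_inter.mp hw
      exact hAindep j u hu'.2 w hw'.2 ((htri k).2 u hu'.1 w hw'.1 huw)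
    have hsub : t k ⊆ (t k ∩ A 0) ∪ (t k ∩ A 1) ∪ (t k ∩ A 2) := by
      intro v hv
      obtain ⟨iv, hiv⟩ := hpart v
      rcases hfin3 iv with h | h | h <;> subst h
      · exact Finset.mem_union.mpr (Or.inl (Finset.mem_union.mpr
          (Or.inl (Finset.mem_inter.mpr ⟨hv, hiv⟩))))
      · exact Finset.mem_union.mpr (Or.inl (Finset.mem_union.mpr
          (Or.inr (Finset.mem_inter.mpr ⟨hv, hiv⟩))))
      · exact Finset.mem_union.mpr (Or.inr (Finset.mem_inter.mpr ⟨hv, hiv⟩))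
    have hsum : 3 ≤ (t k ∩ A 0).card + (t k ∩ A 1).card + (t k ∩ A 2).card := by
      calc 3 = (t k).card := (htri k).1.symm
      _ ≤ ((t k ∩ A 0) ∪ (t k ∩ A 1) ∪ (t k ∩ A 2)).card := Finset.card_le_card hsub
      _ ≤ _ := le_trans (Finset.card_union_le _ _)
          (Nat.add_le_add_right (Finset.card_union_le _ _) _)
    have hcard1 : (t k ∩ A i).card = 1 := by
      have h0 := hle1 0
      have h1 := hle1 1
      have h2 := hle1 2
      rcases hfin3 i with h | h | h <;> subst h <;> omega
    exact Finset.card_eq_one.mp hcard1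
  choose a ha using hone
  have hamem : ∀ (i : Fin 3) (k : Fin m), a i k ∈ t k ∧ a i k ∈ A i := by
    intro i k
    have : a i k ∈ t k ∩ A i := by rw [ha i k]; exact Finset.mem_singleton_self _
    exact Finset.mem_inter.mp this
  have hane : ∀ (i j : Fin 3) (k k' : Fin m), i ≠ j → a i k ≠ a j k' := by
    intro i j k k' hij he
    exact hij (hpartu _ i j (hamem i k).2 (he ▸ (hamem j k').2))
  have hteq : ∀ k, t k = {a 0 k, a 1 k, a 2 k} := by
    intro k
    apply Finset.Subset.antisymm
    · intro v hv
      obtain ⟨i, hi⟩ := hpart v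
      have : v ∈ t k ∩ A i := Finset.mem_inter.mpr ⟨hv, hi⟩
      rw [ha i k, Finset.mem_singleton] at this
      subst this
      rcases hfin3 i with h | h | h <;> subst h <;> simp
    · intro v hv
      simp only [Finset.mem_insert, Finset.mem_singleton] at hv
      rcases hv with h | h | h <;> subst h
      · exact (hamem 0 k).1
      · exact (hamem 1 k).1
      · exact (hamem 2 k).1
  have hadjin : ∀ (i j : Fin 3) (k : Fin m), i ≠ j → H.Adj (a i k) (a j k) :=
    fun i j k hij => (htri k).2 _ (hamem i k).1 _ (hamem j k).1 (hane i j k k hij)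
  -- the triangle graph
  obtain ⟨T, hTadj⟩ : ∃ T : SimpleGraph (Fin m), ∀ k l, T.Adj k l ↔
      (k ≠ l ∧ ∀ u ∈ t k, ∀ w ∈ t l, (∃ i, u ∈ A i ∧ w ∈ A i) ∨ H.Adj u w) := by
    refine ⟨⟨fun k l => k ≠ l ∧ ∀ u ∈ t k, ∀ w ∈ t l,
        (∃ i, u ∈ A i ∧ w ∈ A i) ∨ H.Adj u w, ?_, ?_⟩, fun k l => Iff.rfl⟩
    · refine ⟨fun k l h => ?_⟩
      refine ⟨h.1.symm, ?_⟩
      intro w hw u hu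
      rcases h.2 u hu w hw with ⟨i, h1, h2⟩ | h'
      · exact Or.inl ⟨i, h2, h1⟩
      · exact Or.inr h'.symm
    · refine ⟨fun k h => ?_⟩
      exact h.1 rfl
  letI : DecidableRel T.Adj := Classical.decRel _
  have hcross : ∀ k k', T.Adj k k' → ∀ i j : Fin 3, i ≠ j → H.Adj (a i k) (a j k') := by
    intro k k' hT i j hij
    rcases ((hTadj k k').mp hT).2 (a i k) (hamem i k).1 (a j k') (hamem j k').1 with
      ⟨p, h1, h2⟩ | h
    · exact absurd ((hpartu _ i p (hamem i k).2 h1).trans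
        (hpartu _ j p (hamem j k').2 h2).symm) hij
    · exact h
  -- degree bound in the triangle graph
  have hdegT : ∀ k : Fin m, ((m:ℝ) - 1) - 6*(α'*m) ≤ (T.degree k : ℝ) := by
    intro k
    set Fu : V → Finset V := fun u =>
      Finset.univ.filter (fun w => ¬ H.Adj u w ∧ ¬ ∃ i, u ∈ A i ∧ w ∈ A i) with hFu_def
    have hFucard : ∀ u ∈ t k, ((Fu u).card : ℝ) ≤ 2 * (α' * m) := by
      intro u hu
      obtain ⟨i₀, hi₀⟩ := hpart u
      have hsub : Fu u ⊆ (Finset.univ.erase i₀).biUnion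
          (fun j => (A j).filter (fun w => ¬ H.Adj u w)) := by
        intro w hw
        rw [hFu_def] at hw
        simp only [Finset.mem_filter, Finset.mem_univ, true_and] at hw
        obtain ⟨hnadj, hnsame⟩ := hw
        obtain ⟨jw, hjw⟩ := hpart w
        have hji : jw ≠ i₀ := by rintro rfl; exact hnsame ⟨jw, hi₀, hjw⟩
        exact Finset.mem_biUnion.mpr ⟨jw, Finset.mem_erase.mpr ⟨hji, Finset.mem_univ _⟩,
          Finset.mem_filter.mpr ⟨hjw, hnadj⟩⟩
      have hsingle : ∀ j : Fin 3, j ≠ i₀ →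
          ((((A j).filter (fun w => ¬ H.Adj u w)).card : ℕ) : ℝ) ≤ α' * m := by
        intro j hj
        have hdd := hdegH i₀ j hj.symm u hi₀
        have hsplit := Finset.card_filter_add_card_filter_not
          (s := A j) (p := fun w => H.Adj u w)
        have hAj := hAcard j
        have h1 : (((A j).filter (fun w => H.Adj u w)).card : ℝ)
            + (((A j).filter (fun w => ¬ H.Adj u w)).card : ℝ) = (m : ℝ) := by
          rw [← hAj]
          exact_mod_cast hsplit
        have h2 : (1 - α') * m ≤ (((A j).filter (fun w => H.Adj u w)).card : ℝ) := hdd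
        nlinarith
      have hnat : (Fu u).card ≤ ∑ j ∈ Finset.univ.erase i₀,
          ((A j).filter (fun w => ¬ H.Adj u w)).card :=
        le_trans (Finset.card_le_card hsub) (Finset.card_biUnion_le)
      have hsumR : ((∑ j ∈ Finset.univ.erase i₀,
          ((A j).filter (fun w => ¬ H.Adj u w)).card : ℕ) : ℝ)
          ≤ ∑ _j ∈ Finset.univ.erase i₀, (α' * m) := by
        push_cast
        apply Finset.sum_le_sum
        intro j hj
        exact hsingle j (Finset.mem_erase.mp hj).1
      have hcount : (Finset.univ.erase i₀).card = 2 := by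
        rw [Finset.card_erase_of_mem (Finset.mem_univ _), Finset.card_univ]
        rfl
      have hconst : (∑ _j ∈ Finset.univ.erase i₀, (α' * m) : ℝ) = 2 * (α' * m) := by
        rw [Finset.sum_const, hcount]
        simp [nsmul_eq_mul]
      calc ((Fu u).card : ℝ) ≤ _ := by exact_mod_cast hnat
        _ ≤ _ := hsumR
        _ = 2 * (α' * m) := hconst
    set Bad : Finset V := (t k).biUnion Fu with hBad_def
    have hBadcard : (Bad.card : ℝ) ≤ 6 * (α' * m) := by
      have hnat : Bad.card ≤ ∑ u ∈ t k, (Fu u).card := Finset.card_biUnion_le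
      have hsumR : ((∑ u ∈ t k, (Fu u).card : ℕ) : ℝ) ≤ ∑ _u ∈ t k, (2 * (α' * m)) := by
        push_cast
        exact Finset.sum_le_sum hFucard
      have hconst : (∑ _u ∈ t k, (2 * (α' * m)) : ℝ) = 3 * (2 * (α' * m)) := by
        rw [Finset.sum_const, (htri k).1]
        simp [nsmul_eq_mul]
      have : (Bad.card : ℝ) ≤ 3 * (2 * (α' * m)) := by
        calc (Bad.card : ℝ) ≤ _ := by exact_mod_cast hnat
          _ ≤ _ := hsumR
          _ = _ := hconst
      linarith
    set nonN : Finset (Fin m) := (Finset.univ.erase k) \ T.neighborFinset k with hnonN_def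
    have hwit : ∀ l ∈ nonN, ∃ w, w ∈ t l ∧ w ∈ Bad := by
      intro l hl
      rw [hnonN_def, Finset.mem_sdiff, Finset.mem_erase] at hl
      obtain ⟨⟨hlk, -⟩, hnadj⟩ := hl
      have hnT : ¬ T.Adj k l := fun h => hnadj ((SimpleGraph.mem_neighborFinset _ _ _).mpr h)
      have hexists : ∃ u ∈ t k, ∃ w ∈ t l, ¬ H.Adj u w ∧ ¬ ∃ i, u ∈ A i ∧ w ∈ A i := by
        by_contra hcon
        push_neg at hcon
        apply hnT
        rw [hTadj]
        refine ⟨hlk.symm, fun u hu w hw => ?_⟩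
        by_cases hadj : H.Adj u w
        · exact Or.inr hadj
        · exact Or.inl (hcon u hu w hw hadj)
      obtain ⟨u, hu, w, hw, hnor1, hnor2⟩ := hexists
      refine ⟨w, hw, ?_⟩
      rw [hBad_def]
      exact Finset.mem_biUnion.mpr ⟨u, hu, by
        rw [hFu_def]
        exact Finset.mem_filter.mpr ⟨Finset.mem_univ _, hnor1, hnor2⟩⟩
    have hVne : Nonempty V := by
      rw [← Fintype.card_pos_iff, hcardV]
      omega
    obtain ⟨v0⟩ := hVne
    have hinj : nonN.card ≤ Bad.card := by
      choose wfn hwfn1 hwfn2 using hwit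
      set f : Fin m → V := fun l => if h : l ∈ nonN then wfn l h else v0 with hf_def
      apply Finset.card_le_card_of_injOn f
      · intro l hl
        rw [Finset.mem_coe] at hl
        rw [hf_def]
        simp only [dif_pos hl]
        exact hwfn2 l hl
      · intro l hl l' hl' hfe
        simp only [Finset.mem_coe] at hl hl'
        rw [hf_def] at hfe
        simp only [dif_pos hl, dif_pos hl'] at hfe
        by_contra hne
        exact (Finset.disjoint_left.mp (htdisj l l' hne)) (hwfn1 l hl) (hfe ▸ hwfn1 l' hl')
    have hnb_sub : T.neighborFinset k ⊆ Finset.univ.erase k := by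
      intro l hl
      rw [SimpleGraph.mem_neighborFinset] at hl
      exact Finset.mem_erase.mpr ⟨hl.ne', Finset.mem_univ _⟩
    have hcerase : (Finset.univ.erase k : Finset (Fin m)).card = m - 1 := by
      rw [Finset.card_erase_of_mem (Finset.mem_univ _), Finset.card_univ, Fintype.card_fin]
    have hpartition : nonN.card + T.degree k = m - 1 := by
      have h := Finset.card_sdiff_add_card_eq_card hnb_sub
      rw [hcerase] at h
      exact h
    have hm1 : ((m - 1 : ℕ) : ℝ) = (m : ℝ) - 1 := by
      have : 1 ≤ m := by omega
      push_cast [Nat.cast_sub this]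
      ring
    have : ((nonN.card : ℕ) : ℝ) ≤ 6 * (α' * m) := le_trans (by exact_mod_cast hinj) hBadcard
    have hdg : ((T.degree k : ℕ) : ℝ) = ((m:ℝ) - 1) - nonN.card := by
      rw [← hm1]
      have := hpartition
      push_cast [← this]
      ring
    rw [hdg]
    linarith
  -- Ore condition
  have hαm : α' * m ≤ (1/100 : ℝ) * m :=
    mul_le_mul_of_nonneg_right hα1 (by positivity)
  have hmr : (40 : ℝ) ≤ (m : ℝ) := by exact_mod_cast hm40
  have hOre : ∀ p q : Fin m, p ≠ q → ¬ T.Adj p q →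
      Fintype.card (Fin m) + 1 ≤ T.degree p + T.degree q := by
    intro p q _ _
    rw [Fintype.card_fin]
    have h1 := hdegT p
    have h2 := hdegT q
    have : ((m + 1 : ℕ) : ℝ) ≤ ((T.degree p + T.degree q : ℕ) : ℝ) := by
      push_cast
      linarith
    exact_mod_cast this
  -- block lemmas
  have hblknd : ∀ k : Fin m, (blk a k).Nodup := by
    intro k
    have h01 := hane 0 1 k k (by decide)
    have h02 := hane 0 2 k k (by decide)
    have h12 := hane 1 2 k k (by decide)
    simp [blk, h01, h02, h12]
  have hblkt : ∀ (k : Fin m) (v : V), v ∈ blk a k → v ∈ t k := by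
    intro k v hv
    rw [hteq k]
    simp only [blk, List.mem_cons, List.not_mem_nil, or_false] at hv
    rcases hv with h | h | h <;> subst h <;> simp
  have hblkdisj : ∀ k k' : Fin m, k ≠ k' → ∀ v ∈ blk a k, v ∉ blk a k' :=
    fun k k' hkk v hv hv' =>
      (Finset.disjoint_left.mp (htdisj k k' hkk)) (hblkt k v hv) (hblkt k' v hv')
  have hblktof : ∀ k : Fin m, (blk a k).toFinset = t k := by
    intro k
    rw [hteq k]
    simp [blk]
  have hassemble : ∀ L : List (Fin m), L.Chain' T.Adj → L.Nodup → (∀ k, k ∈ L) →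
      SP H (L.flatMap (blk a)) ∧ (L.flatMap (blk a)).Nodup ∧ (∀ v, v ∈ L.flatMap (blk a)) ∧
        (L.flatMap (blk a)).length = 3 * m := by
    intro L hch hnd hLm
    have hLlen : L.length = m := by
      have htf : L.toFinset = Finset.univ := Finset.eq_univ_iff_forall.mpr
        (fun w => List.mem_toFinset.mpr (hLm w))
      rw [← List.toFinset_card_of_nodup hnd, htf, Finset.card_univ, Fintype.card_fin]
    refine ⟨SP_flatMap a H T hadjin hcross L hch,
      nodup_flatMap_blk a hblknd hblkdisj L hnd, ?_, ?_⟩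
    · intro v
      obtain ⟨k, hk⟩ := htcover v
      refine List.mem_flatMap.mpr ⟨k, hLm k, ?_⟩
      rw [hteq k] at hk
      simp only [Finset.mem_insert, Finset.mem_singleton] at hk
      rcases hk with h | h | h <;> subst h <;> simp [blk]
    · rw [length_flatMap_blk, hLlen]
  set x : Fin m := ⟨0, hm⟩ with hx_def
  set y : Fin m := ⟨m - 1, Nat.sub_lt hm one_pos⟩ with hy_def
  constructor
  · -- the square Hamiltonian cycle
    have hdx : 0 < T.degree x := by
      have h := hdegT x
      have hr : (0:ℝ) < (T.degree x : ℝ) := by linarith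
      exact_mod_cast hr
    obtain ⟨z, hz⟩ := Finset.card_pos.mp hdx
    have hxz : T.Adj x z := (SimpleGraph.mem_neighborFinset _ _ _).mp hz
    obtain ⟨L, hch, hnd, hLm, hh, hl⟩ := hamConnected T hOre x z hxz.ne
    obtain ⟨hsp, hvnd, hvm, hvlen⟩ := hassemble L hch hnd hLm
    have htk3 := take_flatMap_blk a L x hh
    have hdr3 := drop_flatMap_blk a L z hl
    set cl := L.flatMap (blk a) with hcl_def
    have hclen : cl.length = 3 * m := hvlen
    have hge : 6 ≤ cl.length := by omega
    have hc0 : cl[0]? = some (a 0 x) := by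
      have h := congrArg (fun l : List V => l[0]?) htk3
      simp only [List.getElem?_take] at h
      simpa [blk] using h
    have hc1 : cl[1]? = some (a 1 x) := by
      have h := congrArg (fun l : List V => l[1]?) htk3
      simp only [List.getElem?_take] at h
      simpa [blk] using h
    have hcl1 : cl[cl.length - 1]? = some (a 2 z) := by
      have h := congrArg (fun l : List V => l[2]?) hdr3
      simp only [List.getElem?_drop] at h
      rw [show cl.length - 3 + 2 = cl.length - 1 from by omega] at h
      simpa [blk] using h
    have hcl2 : cl[cl.length - 2]? = some (a 1 z) := by
      have h := congrArg (fun l : List V => l[1]?) hdr3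
      simp only [List.getElem?_drop] at h
      rw [show cl.length - 3 + 1 = cl.length - 2 from by omega] at h
      simpa [blk] using h
    have e0 : cl[0]'(by omega) = a 0 x := by
      have h := List.getElem?_eq_getElem (show 0 < cl.length by omega)
      rw [hc0] at h
      exact (Option.some_inj.mp h).symm
    have e1 : cl[1]'(by omega) = a 1 x := by
      have h := List.getElem?_eq_getElem (show 1 < cl.length by omega)
      rw [hc1] at h
      exact (Option.some_inj.mp h).symm
    have el1 : cl[cl.length - 1]'(by omega) = a 2 z := by
      have h := List.getElem?_eq_getElem (show cl.length - 1 < cl.length by omega)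
      rw [hcl1] at h
      exact (Option.some_inj.mp h).symm
    have el2 : cl[cl.length - 2]'(by omega) = a 1 z := by
      have h := List.getElem?_eq_getElem (show cl.length - 2 < cl.length by omega)
      rw [hcl2] at h
      exact (Option.some_inj.mp h).symm
    refine cycleFromList H cl hsp hvnd hvm (by rw [hclen, hcardV]) (by omega) ?_ ?_ ?_
    · rw [el1, e0]
      exact hcross z x hxz.symm 2 0 (by decide)
    · rw [el1, e1]
      exact hcross z x hxz.symm 2 1 (by decide)
    · rw [el2, e0]
      exact hcross z x hxz.symm 1 0 (by decide)
  · -- the square Hamiltonian path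
    have hxy : x ≠ y := by
      intro hxyeq
      have hval : (0:ℕ) = m - 1 := congrArg Fin.val hxyeq
      omega
    obtain ⟨L, hch, hnd, hLm, hh, hl⟩ := hamConnected T hOre x y hxy
    obtain ⟨hsp, hvnd, hvm, hvlen⟩ := hassemble L hch hnd hLm
    refine ⟨L.flatMap (blk a), ⟨hvnd, SP_fin hsp⟩, by rw [hvlen, hcardV], hvm, ?_, ?_⟩
    · rw [take_flatMap_blk a L x hh, hblktof]
    · rw [drop_flatMap_blk a L y hl, hblktof]
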